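/- Let A ∈ sl(2,C) with real positive eigenvalue μ, with eigenline L₊ for eigenvalue μ and eigenline L₋ for eigenvalue -μ. Then for every line L ∈ CP¹ with L ≠ L₊, the line exp(xA)·L converges to L₋ in CP¹ as x → -∞. -/

import Mathlib

open Matrix Filter

/-- The orthogonal projection matrix onto the line in `ℂ²` spanned by `w`.  Convergence of
lines in `ℂP¹` is equivalent to convergence of these projection matrices. -/
noncomputable def projLine (w : Fin 2 → ℂ) : Matrix (Fin 2) (Fin 2) ℂ :=
  ((‖w 0‖ ^ 2 + ‖w 1‖ ^ 2 : ℝ) : ℂ)⁻¹ • Matrix.vecMulVec w (fun i => starRingEnd ℂ (w i))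

/-- `mulVec` by a fixed vector, as a linear map in the matrix. -/
noncomputable def mulVecL (v : Fin 2 → ℂ) : Matrix (Fin 2) (Fin 2) ℂ →ₗ[ℂ] (Fin 2 → ℂ) where
  toFun M := M.mulVec v
  map_add' M N := Matrix.add_mulVec M N v
  map_smul' c M := Matrix.smul_mulVec c M v

lemma pow_mulVec_eigen (M : Matrix (Fin 2) (Fin 2) ℂ) (v : Fin 2 → ℂ) (lam : ℂ)
    (h : M.mulVec v = lam • v) (n : ℕ) : (M ^ n).mulVec v = lam ^ n • v := by
  induction n with
  | zero => simp [Matrix.one_mulVec]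
  | succ n ih =>
    rw [pow_succ, ← Matrix.mulVec_mulVec, h, Matrix.mulVec_smul, ih, smul_smul, pow_succ, mul_comm lam (lam ^ n)]

lemma exp_mulVec_eigen (M : Matrix (Fin 2) (Fin 2) ℂ) (v : Fin 2 → ℂ) (lam : ℂ)
    (h : M.mulVec v = lam • v) :
    (NormedSpace.exp M).mulVec v = Complex.exp lam • v := by
  letI : SeminormedRing (Matrix (Fin 2) (Fin 2) ℂ) := Matrix.linftyOpSemiNormedRing
  letI : NormedRing (Matrix (Fin 2) (Fin 2) ℂ) := Matrix.linftyOpNormedRing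
  letI : NormedAlgebra ℂ (Matrix (Fin 2) (Fin 2) ℂ) := Matrix.linftyOpNormedAlgebra
  have hsum : Summable fun n : ℕ => ((n.factorial : ℂ))⁻¹ • M ^ n := NormedSpace.expSeries_summable' M
  have hmap : (NormedSpace.exp M).mulVec v
      = ∑' n : ℕ, (mulVecL v) (((n.factorial : ℂ))⁻¹ • M ^ n) := by
    rw [NormedSpace.exp_eq_tsum ℂ]
    exact ((mulVecL v).toContinuousLinearMap.map_tsum hsum)
  rw [hmap]
  have key : ∀ n : ℕ, (mulVecL v) (((n.factorial : ℂ))⁻¹ • M ^ n) = (((n.factorial : ℂ))⁻¹ * lam ^ n) • v := by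
    intro n
    show (((n.factorial : ℂ))⁻¹ • M ^ n).mulVec v = _
    rw [Matrix.smul_mulVec, pow_mulVec_eigen M v lam h n, smul_smul]
  simp_rw [key]
  have hs : Summable fun n : ℕ => ((n.factorial : ℂ))⁻¹ * lam ^ n := by
    have h' : Summable fun n : ℕ => ((n.factorial : ℂ))⁻¹ • lam ^ n :=
      NormedSpace.expSeries_summable' (𝕂 := ℂ) lam
    simpa [smul_eq_mul] using h'
  rw [hs.tsum_smul_const]
  congr 1
  rw [Complex.exp_eq_exp_ℂ, NormedSpace.exp_eq_tsum ℂ]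
  simp [smul_eq_mul]

lemma normsq_pos (w : Fin 2 → ℂ) (hw : w ≠ 0) : (0:ℝ) < ‖w 0‖ ^ 2 + ‖w 1‖ ^ 2 := by
  by_contra h
  push_neg at h
  have e0 : w 0 = 0 := by
    have h2 : ‖w 0‖ ^ 2 = 0 := le_antisymm (by nlinarith [sq_nonneg ‖w 1‖]) (sq_nonneg _)
    have := pow_eq_zero_iff (n := 2) (by norm_num) |>.mp h2
    exact norm_eq_zero.mp this
  have e1 : w 1 = 0 := by
    have h2 : ‖w 1‖ ^ 2 = 0 := le_antisymm (by nlinarith [sq_nonneg ‖w 0‖]) (sq_nonneg _)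
    have := pow_eq_zero_iff (n := 2) (by norm_num) |>.mp h2
    exact norm_eq_zero.mp this
  apply hw
  funext i
  fin_cases i <;> simp [e0, e1]

lemma projLine_smul (c : ℂ) (hc : c ≠ 0) (w : Fin 2 → ℂ) : projLine (c • w) = projLine w := by
  by_cases hw : w = 0
  · simp [hw]
  have hS : (0:ℝ) < ‖w 0‖ ^ 2 + ‖w 1‖ ^ 2 := normsq_pos w hw
  have hV : Matrix.vecMulVec (c • w) (fun i => starRingEnd ℂ ((c • w) i))
      = (c * starRingEnd ℂ c) • Matrix.vecMulVec w (fun i => starRingEnd ℂ (w i)) := by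
    ext i j
    simp [Matrix.vecMulVec_apply, Matrix.smul_apply, smul_eq_mul, _root_.map_mul]
    ring
  have hnorm : ∀ i, ‖(c • w) i‖ ^ 2 = ‖c‖ ^ 2 * ‖w i‖ ^ 2 := by
    intro i
    simp [norm_smul, mul_pow]
  unfold projLine
  rw [hV, smul_smul, hnorm 0, hnorm 1]
  congr 1
  have hcc : c * starRingEnd ℂ c = ((‖c‖ ^ 2 : ℝ) : ℂ) := by
    rw [Complex.mul_conj']
    push_cast
    ring
  rw [hcc]
  have hrw : (‖c‖ ^ 2 * ‖w 0‖ ^ 2 + ‖c‖ ^ 2 * ‖w 1‖ ^ 2 : ℝ)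
      = ‖c‖ ^ 2 * (‖w 0‖ ^ 2 + ‖w 1‖ ^ 2) := by ring
  rw [hrw]
  have hX : ((‖c‖ ^ 2 : ℝ) : ℂ) ≠ 0 := by
    have : (‖c‖ : ℝ) ≠ 0 := norm_ne_zero_iff.mpr hc
    exact Complex.ofReal_ne_zero.mpr (by positivity)
  rw [Complex.ofReal_mul, mul_inv, mul_comm (((‖c‖ ^ 2 : ℝ) : ℂ))⁻¹, mul_assoc,
    inv_mul_cancel₀ hX, mul_one]

lemma projLine_continuousAt (v : Fin 2 → ℂ) (hv : v ≠ 0) : ContinuousAt projLine v := by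
  have hS := normsq_pos v hv
  unfold projLine
  apply ContinuousAt.fun_smul
  · apply ContinuousAt.inv₀
    · apply Continuous.continuousAt
      exact Complex.continuous_ofReal.comp
        (((continuous_apply (0 : Fin 2)).norm.pow 2).add
          ((continuous_apply (1 : Fin 2)).norm.pow 2))
    · exact Complex.ofReal_ne_zero.mpr hS.ne'
  · apply Continuous.continuousAt
    apply continuous_pi
    intro i
    apply continuous_pi
    intro j
    exact (continuous_apply i).mul (Complex.continuous_conj.comp (continuous_apply j))

theorem stmt8 (A : Matrix (Fin 2) (Fin 2) ℂ) (htr : A.trace = 0) (μ : ℝ) (hμ : 0 < μ)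
    (vp vm : Fin 2 → ℂ) (hvp : vp ≠ 0) (hvm : vm ≠ 0)
    (hep : A.mulVec vp = (μ : ℂ) • vp) (hem : A.mulVec vm = (-μ : ℂ) • vm) :
    ∀ w : Fin 2 → ℂ, w ≠ 0 → projLine w ≠ projLine vp →
      Tendsto (fun x : ℝ => projLine ((NormedSpace.exp ((x : ℂ) • A)).mulVec w))
        atBot (nhds (projLine vm)) := by
  intro w hw hwp
  have hμ' : (μ : ℂ) ≠ 0 := by
    simpa using hμ.ne'
  -- `vp, vm` are linearly independent
  have hli : LinearIndependent ℂ ![vp, vm] := by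
    rw [linearIndependent_fin2]
    refine ⟨by simpa using hvm, fun a ha => ?_⟩
    simp only [Matrix.cons_val_one, Matrix.head_cons, Matrix.cons_val_zero] at ha
    have h1 : A.mulVec (a • vm) = A.mulVec vp := by rw [ha]
    rw [Matrix.mulVec_smul, hem, hep, ← ha, smul_smul, smul_smul] at h1
    have h2 : (a * (-μ : ℂ) - (μ : ℂ) * a) • vm = 0 := by
      rw [sub_smul, h1, sub_self]
    have ha0 : a = 0 := by
      rcases smul_eq_zero.mp h2 with h | h
      · have h3 : (-2 * (μ : ℂ)) * a = 0 := by linear_combination h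
        rcases mul_eq_zero.mp h3 with h' | h'
        · exact absurd (by linear_combination -h'/2 : (μ : ℂ) = 0) hμ'
        · exact h'
      · exact absurd h hvm
    rw [ha0, zero_smul] at ha
    exact hvp ha.symm
  -- decompose `w` in this basis
  obtain ⟨a, b, hab⟩ : ∃ a b : ℂ, a • vp + b • vm = w := by
    have hspan : Submodule.span ℂ (Set.range ![vp, vm]) = ⊤ :=
      hli.span_eq_top_of_card_eq_finrank (by simp)
    have hmem : w ∈ Submodule.span ℂ ({vp, vm} : Set (Fin 2 → ℂ)) := by
      have : Set.range ![vp, vm] = {vp, vm} := by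
        simp only [Matrix.range_cons, Matrix.range_empty, Set.union_empty, Set.union_singleton]
        exact Set.pair_comm vm vp
      rw [← this, hspan]; trivial
    exact Submodule.mem_span_pair.mp hmem
  have hb : b ≠ 0 := by
    intro hb0
    apply hwp
    rw [hb0, zero_smul, add_zero] at hab
    have ha0 : a ≠ 0 := by
      intro h; rw [h, zero_smul] at hab; exact hw hab.symm
    rw [← hab]
    exact projLine_smul a ha0 vp
  -- rewrite the evolved line
  have hrw : ∀ x : ℝ, projLine ((NormedSpace.exp ((x : ℂ) • A)).mulVec w)
      = projLine ((Complex.exp (2 * x * μ) * (a / b)) • vp + vm) := by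
    intro x
    have hp : ((x : ℂ) • A).mulVec vp = ((x : ℂ) * μ) • vp := by
      rw [Matrix.smul_mulVec, hep, smul_smul]
    have hm : ((x : ℂ) • A).mulVec vm = (-((x : ℂ) * μ)) • vm := by
      rw [Matrix.smul_mulVec, hem, smul_smul]; ring_nf
    have hexp : (NormedSpace.exp ((x : ℂ) • A)).mulVec w
        = (a * Complex.exp ((x : ℂ) * μ)) • vp + (b * Complex.exp (-((x : ℂ) * μ))) • vm := by
      rw [← hab, Matrix.mulVec_add, Matrix.mulVec_smul, Matrix.mulVec_smul,
        exp_mulVec_eigen _ _ _ hp, exp_mulVec_eigen _ _ _ hm, smul_smul, smul_smul]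
    rw [hexp]
    have hc : (Complex.exp (-((x : ℂ) * μ)) * b) ≠ 0 :=
      mul_ne_zero (Complex.exp_ne_zero _) hb
    rw [← projLine_smul _ hc (((Complex.exp (2 * x * μ) * (a / b)) • vp + vm))]
    congr 1
    rw [smul_add, smul_smul]
    have h1 : Complex.exp (-((x : ℂ) * ↑μ)) * Complex.exp (2 * ↑x * ↑μ)
        = Complex.exp ((x : ℂ) * ↑μ) := by
      rw [← Complex.exp_add]; congr 1; ring
    have he : Complex.exp (-((x : ℂ) * ↑μ)) * b * (Complex.exp (2 * ↑x * ↑μ) * (a / b))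
        = a * Complex.exp ((x : ℂ) * ↑μ) := by
      calc Complex.exp (-((x : ℂ) * ↑μ)) * b * (Complex.exp (2 * ↑x * ↑μ) * (a / b))
          = Complex.exp (-((x : ℂ) * ↑μ)) * Complex.exp (2 * ↑x * ↑μ) * (b * b⁻¹ * a) := by
            rw [div_eq_mul_inv]; ring
        _ = a * Complex.exp ((x : ℂ) * ↑μ) := by
            rw [h1, mul_inv_cancel₀ hb, one_mul, mul_comm]
    rw [he, mul_comm (Complex.exp (-((x : ℂ) * ↑μ))) b]
  simp_rw [hrw]
  -- the coefficient tends to zero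
  have hcoef : Tendsto (fun x : ℝ => Complex.exp (2 * x * μ) * (a / b)) atBot (nhds 0) := by
    have h1 : Tendsto (fun x : ℝ => (2 * x * μ : ℝ)) atBot atBot :=
      Tendsto.atBot_mul_const hμ
        ((tendsto_const_mul_atBot_of_pos (by norm_num : (0:ℝ) < 2)).mpr tendsto_id)
    have h2 : Tendsto (fun x : ℝ => Real.exp (2 * x * μ)) atBot (nhds 0) :=
      Real.tendsto_exp_atBot.comp h1
    have h3 : Tendsto (fun x : ℝ => (Real.exp (2 * x * μ) : ℂ)) atBot (nhds 0) := by
      rw [show ((0:ℂ) = ((0:ℝ):ℂ)) by norm_num]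
      exact (Complex.continuous_ofReal.tendsto 0).comp h2
    have h4 : ∀ x : ℝ, (Real.exp (2 * x * μ) : ℂ) = Complex.exp (2 * x * μ) := by
      intro x
      rw [Complex.ofReal_exp]
      congr 1
      push_cast
      ring
    simp_rw [h4] at h3
    simpa using h3.mul_const (a / b)
  have hvec : Tendsto (fun x : ℝ => (Complex.exp (2 * x * μ) * (a / b)) • vp + vm) atBot
      (nhds vm) := by
    have := (hcoef.smul_const vp).add_const vm
    simpa using this
  exact (projLine_continuousAt vm hvm).tendsto.comp hvec
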